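/- First-fit (the greedy on-line coloring algorithm that assigns each new vertex the least positive integer not used on its previously presented neighbors) uses at most ⌊log₂ n⌋ + 1 colors on any forest with n vertices, presented in any order. -/

import Mathlib

open SimpleGraph Finset

/-- The restriction of `G` to vertices `≤ m` (edges between vertices `≤ m`). -/
private def below {n : ℕ} (G : SimpleGraph (Fin n)) (m : Fin n) : SimpleGraph (Fin n) where
  Adj a b := G.Adj a b ∧ a ≤ m ∧ b ≤ m
  symm := by constructor; rintro a b ⟨h, ha, hb⟩; exact ⟨h.symm, hb, ha⟩
  loopless := by constructor; rintro a ⟨h, _⟩; exact G.loopless.irrefl a h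

private lemma below_le {n : ℕ} (G : SimpleGraph (Fin n)) (m : Fin n) : below G m ≤ G :=
  fun _ _ h => h.1

private lemma below_mono {n : ℕ} (G : SimpleGraph (Fin n)) {m m' : Fin n} (h : m ≤ m') :
    below G m ≤ below G m' :=
  fun _ _ ⟨hadj, ha, hb⟩ => ⟨hadj, ha.trans h, hb.trans h⟩

private lemma below_support {n : ℕ} {G : SimpleGraph (Fin n)} {m : Fin n} :
    ∀ {a b : Fin n} (p : (below G m).Walk a b), a ≤ m → ∀ x ∈ p.support, x ≤ m := by
  intro a b p
  induction p with
  | nil => intro ha x hx; simp at hx; subst hx; exact ha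
  | cons h p ih =>
    intro ha x hx
    rw [SimpleGraph.Walk.support_cons] at hx
    rcases List.mem_cons.mp hx with rfl | hx
    · exact ha
    · exact ih h.2.2 x hx

private lemma support_mapLe {V : Type*} {G G' : SimpleGraph V} (h : G ≤ G') {a b : V}
    (p : G.Walk a b) : (p.mapLe h).support = p.support := by
  rw [SimpleGraph.Walk.mapLe, SimpleGraph.Walk.support_map]
  exact List.map_id p.support

private lemma below_reach_le {n : ℕ} {G : SimpleGraph (Fin n)} {m a b : Fin n}
    (h : (below G m).Reachable a b) (ha : a ≤ m) : b ≤ m := by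
  obtain ⟨p⟩ := h
  exact below_support p ha b p.end_mem_support

/-- The component of `v` in `G` restricted to vertices `≤ v`, as a `Finset`. -/
private noncomputable def comp {n : ℕ} (G : SimpleGraph (Fin n)) (v : Fin n) : Finset (Fin n) :=
  @Finset.filter _ (fun u => (below G v).Reachable v u) (Classical.decPred _) Finset.univ

private lemma mem_comp {n : ℕ} {G : SimpleGraph (Fin n)} {v u : Fin n} :
    u ∈ comp G v ↔ (below G v).Reachable v u := by
  simp [comp]

private lemma sum_pow_two (c : ℕ) : ∑ k ∈ Finset.range c, 2 ^ k = 2 ^ c - 1 := by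
  induction c with
  | zero => simp
  | succ c ih =>
    rw [Finset.sum_range_succ, ih]
    have : 1 ≤ 2 ^ c := Nat.one_le_two_pow
    omega

theorem firstFit_forest_log_colors (n : ℕ) (G : SimpleGraph (Fin n))
    (hforest : G.IsAcyclic) (col : Fin n → ℕ)
    (hgreedy : ∀ v : Fin n, col v = sInf {c : ℕ | ∀ u : Fin n, u < v → G.Adj u v → col u ≠ c}) :
    ∀ v : Fin n, col v < Nat.log 2 n + 1 := by
  -- witnesses: for each k < col v there is an earlier neighbor colored k
  have hW : ∀ (v : Fin n) (k : ℕ), k < col v → ∃ u : Fin n, u < v ∧ G.Adj u v ∧ col u = k := by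
    intro v k hk
    rw [hgreedy v] at hk
    have := Nat.notMem_of_lt_sInf hk
    simp only [Set.mem_setOf_eq, not_forall] at this
    obtain ⟨u, hu, hadj, hcol⟩ := this
    exact ⟨u, hu, hadj, by push_neg at hcol; exact hcol⟩
  -- key lemma: 2 ^ col v ≤ size of component of v among earlier vertices
  have key : ∀ m : ℕ, ∀ v : Fin n, (v : ℕ) < m → 2 ^ col v ≤ (comp G v).card := by
    intro m
    induction m with
    | zero => intro v hv; omega
    | succ m ih =>
      intro v hv
      set c := col v with hc
      -- choose the witnesses
      have hwex : ∀ k : ℕ, k < c → ∃ u : Fin n, u < v ∧ G.Adj u v ∧ col u = k := hW v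
      classical
      let w : ℕ → Fin n := fun k => if h : k < c then (hwex k h).choose else v
      have hwlt : ∀ k, k < c → w k < v := by
        intro k hk; simp only [w, dif_pos hk]; exact (hwex k hk).choose_spec.1
      have hwadj : ∀ k, k < c → G.Adj (w k) v := by
        intro k hk; simp only [w, dif_pos hk]; exact (hwex k hk).choose_spec.2.1
      have hwcol : ∀ k, k < c → col (w k) = k := by
        intro k hk; simp only [w, dif_pos hk]; exact (hwex k hk).choose_spec.2.2
      -- members of comp G (w k) are ≤ w k, hence < v
      have hcomp_le : ∀ k, k < c → ∀ x ∈ comp G (w k), x ≤ w k := by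
        intro k hk x hx
        exact below_reach_le (mem_comp.mp hx) le_rfl
      set B : Finset (Fin n) := (Finset.range c).biUnion (fun k => comp G (w k)) with hB
      -- the witnesses' components are pairwise disjoint (else there is a cycle through v)
      have hdisj : ∀ j ∈ Finset.range c, ∀ k ∈ Finset.range c, j ≠ k →
          Disjoint (comp G (w j)) (comp G (w k)) := by
        intro j hj k hk hjk
        rw [Finset.mem_range] at hj hk
        rw [Finset.disjoint_left]
        intro x hxj hxk
        have hne : w j ≠ w k := by
          intro h; apply hjk
          rw [← hwcol j hj, ← hwcol k hk, h]
        obtain ⟨p⟩ := mem_comp.mp hxj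
        obtain ⟨q⟩ := mem_comp.mp hxk
        -- walk from w j to w k in G avoiding v
        have hle : ∀ k', k' < c → below G (w k') ≤ G := fun k' _ => below_le G (w k')
        let W : G.Walk (w j) (w k) := (p.mapLe (hle j hj)).append (q.mapLe (hle k hk)).reverse
        have hvW : v ∉ W.support := by
          intro hmem
          rw [SimpleGraph.Walk.mem_support_append_iff] at hmem
          rcases hmem with hmem | hmem
          · rw [support_mapLe] at hmem
            exact absurd (below_support p le_rfl _ hmem) (not_le.mpr (hwlt j hj))
          · rw [SimpleGraph.Walk.support_reverse, List.mem_reverse, support_mapLe] at hmem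
            exact absurd (below_support q le_rfl _ hmem) (not_le.mpr (hwlt k hk))
        -- the path through v
        have hadj1 : G.Adj (w j) v := hwadj j hj
        have hadj2 : G.Adj v (w k) := (hwadj k hk).symm
        let Q : G.Walk (w j) (w k) := SimpleGraph.Walk.cons hadj1 (SimpleGraph.Walk.cons hadj2 SimpleGraph.Walk.nil)
        have hQpath : Q.IsPath := by
          rw [SimpleGraph.Walk.isPath_def]
          simp only [Q, SimpleGraph.Walk.support_cons, SimpleGraph.Walk.support_nil]
          refine List.nodup_cons.mpr ⟨?_, List.nodup_cons.mpr ⟨?_, List.nodup_singleton _⟩⟩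
          · simp only [List.mem_cons, List.mem_singleton, List.not_mem_nil, or_false]
            rintro (h | h)
            · exact hadj1.ne h
            · exact hne h
          · simp only [List.mem_singleton]
            intro h; exact hadj2.ne h
        have := hforest.path_unique W.toPath ⟨Q, hQpath⟩
        have hvQ : v ∈ Q.support := by
          simp [Q, SimpleGraph.Walk.support_cons]
        have hvP : v ∈ (W.toPath : G.Walk (w j) (w k)).support := by
          rw [this]; exact hvQ
        exact hvW (SimpleGraph.Walk.support_toPath_subset W hvP)
      -- each witness component sits inside comp G v, and v is not in any of them
      have hBsub : insert v B ⊆ comp G v := by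
        intro x hx
        rcases Finset.mem_insert.mp hx with rfl | hx
        · exact mem_comp.mpr (SimpleGraph.Reachable.refl _)
        · rw [hB, Finset.mem_biUnion] at hx
          obtain ⟨k, hk, hx⟩ := hx
          rw [Finset.mem_range] at hk
          have hreach : (below G v).Reachable (w k) x :=
            (mem_comp.mp hx).mono (below_mono G (hwlt k hk).le)
          have hadj : (below G v).Adj v (w k) :=
            ⟨(hwadj k hk).symm, le_rfl, (hwlt k hk).le⟩
          exact mem_comp.mpr (hadj.reachable.trans hreach)
      have hvB : v ∉ B := by
        rw [hB, Finset.mem_biUnion]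
        rintro ⟨k, hk, hmem⟩
        rw [Finset.mem_range] at hk
        exact absurd (hcomp_le k hk v hmem) (not_le.mpr (hwlt k hk))
      -- counting
      have hcard : (B.card : ℕ) = ∑ k ∈ Finset.range c, (comp G (w k)).card :=
        Finset.card_biUnion hdisj
      have hsum : 2 ^ c - 1 ≤ B.card := by
        rw [hcard, ← sum_pow_two c]
        apply Finset.sum_le_sum
        intro k hk
        rw [Finset.mem_range] at hk
        have hlt : ((w k : Fin n) : ℕ) < m := by
          have := hwlt k hk
          have : ((w k : Fin n) : ℕ) < (v : ℕ) := this
          omega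
        calc 2 ^ k = 2 ^ col (w k) := by rw [hwcol k hk]
          _ ≤ (comp G (w k)).card := ih (w k) hlt
      calc 2 ^ c = (2 ^ c - 1) + 1 := by have : 1 ≤ 2 ^ c := Nat.one_le_two_pow; omega
        _ ≤ B.card + 1 := by omega
        _ = (insert v B).card := (Finset.card_insert_of_notMem hvB).symm
        _ ≤ (comp G v).card := Finset.card_le_card hBsub
  -- conclude
  intro v
  have h1 : 2 ^ col v ≤ (comp G v).card := key (n) v v.isLt
  have h2 : (comp G v).card ≤ n := by
    calc (comp G v).card ≤ (Finset.univ : Finset (Fin n)).card := Finset.card_le_card (Finset.subset_univ _)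
      _ = n := by simp
  have h3 : 2 ^ col v ≤ n := h1.trans h2
  have : col v ≤ Nat.log 2 n := Nat.le_log_of_pow_le (by norm_num) h3
  omega
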